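/- Let F be a finite field of order q^2 with q a power of 2, let π(x) = x^{−q}, and let r be a nonzero element of the algebraic closure of F with π-orbit P of size n. Then the sum S = Σ over unordered pairs {u,v} ⊆ P, u ≠ v, of uv/(u−v)^2 lies in the subfield H of order q, and its absolute trace Tr_{H/F_2}(S) is congruent to binom(n−1, 2) modulo 2. -/

import Mathlib

namespace Stmt9Aux

lemma orbit_setup {K : Type*} {g : K → K} (hginj : Function.Injective g)
    (r : K) (P : Finset K) (hP : ∀ x, x ∈ P ↔ ∃ k : ℕ, g^[k] r = x) :
    g^[P.card] r = r ∧ Set.InjOn (fun k => g^[k] r) (Set.Iio P.card)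
      ∧ ∀ x ∈ P, ∃ k, k < P.card ∧ g^[k] r = x := by
  classical
  have hmaps : ∀ k, g^[k] r ∈ P := fun k => (hP _).mpr ⟨k, rfl⟩
  obtain ⟨a, -, b, -, hab, heq⟩ :=
    Finset.exists_ne_map_eq_of_card_lt_of_maps_to
      (t := P) (s := Finset.range (P.card + 1)) (by simp)
      (fun a _ => hmaps a)
  wlog hlt : a < b generalizing a b
  · exact this b a hab.symm heq.symm (by omega)
  have hper : r ∈ Function.periodicPts g := by
    refine ⟨b - a, by omega, ?_⟩
    have : g^[a] (g^[b - a] r) = g^[a] r := by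
      rw [← Function.iterate_add_apply]
      rw [show a + (b - a) = b by omega]
      exact heq.symm
    exact hginj.iterate a this
  have hNpos : 0 < Function.minimalPeriod g r :=
    Function.minimalPeriod_pos_of_mem_periodicPts hper
  have himg : P = (Finset.range (Function.minimalPeriod g r)).image (fun k => g^[k] r) := by
    ext x
    simp only [Finset.mem_image, Finset.mem_range, hP]
    constructor
    · rintro ⟨k, rfl⟩
      exact ⟨k % _, Nat.mod_lt _ hNpos, Function.iterate_mod_minimalPeriod_eq⟩
    · rintro ⟨k, -, rfl⟩
      exact ⟨k, rfl⟩
  have hinj : Set.InjOn (fun k => g^[k] r) (Set.Iio (Function.minimalPeriod g r)) :=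
    Function.iterate_injOn_Iio_minimalPeriod
  have hcard : P.card = Function.minimalPeriod g r := by
    rw [himg, Finset.card_image_of_injOn (by rwa [Finset.coe_range]), Finset.card_range]
  rw [hcard]
  refine ⟨Function.iterate_minimalPeriod, hinj, ?_⟩
  intro x hx
  rw [himg] at hx
  obtain ⟨k, hk, rfl⟩ := Finset.mem_image.mp hx
  exact ⟨k, Finset.mem_range.mp hk, rfl⟩


variable {K : Type*} [Field K] [CharP K 2]

lemma add_ne_zero_of_ne {a b : K} (hab : a ≠ b) : a + b ≠ 0 := by
  intro h
  exact hab (by rw [← CharTwo.neg_eq b]; exact eq_neg_of_add_eq_zero_left h)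

noncomputable def tfun (a b : K) : K := a / (a + b)

lemma tfun_add_tfun {a b : K} (hab : a ≠ b) : tfun a b + tfun b a = 1 := by
  rw [tfun, tfun, add_comm b a, ← add_div, div_self (add_ne_zero_of_ne hab)]

lemma tfun_swap {a b : K} (hab : a ≠ b) : tfun a b = 1 + tfun b a := by
  have h := tfun_add_tfun hab
  rw [CharTwo.add_eq_iff_eq_add] at h
  rw [h, add_comm]

lemma uv_eq {a b : K} (hab : a ≠ b) :
    a * b / (a - b) ^ 2 = tfun a b ^ 2 + tfun a b := by
  have h := add_ne_zero_of_ne hab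
  have h2 : (2 : K) = 0 := CharTwo.two_eq_zero
  rw [CharTwo.sub_eq_add, tfun]
  field_simp
  ring_nf
  linear_combination (-(a^2)) * h2

lemma tfun_pow (mm : ℕ) {a b : K} (ha : a ≠ 0) (hb : b ≠ 0) (hab : a ≠ b) :
    tfun a b ^ 2 ^ mm = tfun ((b ^ 2 ^ mm)⁻¹) ((a ^ 2 ^ mm)⁻¹) := by
  have hA : a ^ 2 ^ mm ≠ 0 := pow_ne_zero _ ha
  have hB : b ^ 2 ^ mm ≠ 0 := pow_ne_zero _ hb
  rw [tfun, tfun, div_pow, add_pow_char_pow, inv_add_inv hB hA]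
  rw [div_div_eq_mul_div, inv_mul_eq_div, mul_comm, mul_div_assoc, div_self hB, mul_one,
    add_comm]

lemma cardD (n : ℕ) :
    (((Finset.range n) ×ˢ (Finset.range n)).filter fun p : ℕ × ℕ => p.1 < p.2).card
      = n.choose 2 := by
  induction n with
  | zero => simp
  | succ n ih =>
    have hsplit : (((Finset.range (n+1)) ×ˢ (Finset.range (n+1))).filter
          fun p : ℕ × ℕ => p.1 < p.2)
        = (((Finset.range n) ×ˢ (Finset.range n)).filter fun p : ℕ × ℕ => p.1 < p.2)
          ∪ (Finset.range n).image (fun i => (i, n)) := by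
      ext ⟨a, b⟩
      simp only [Finset.mem_filter, Finset.mem_product, Finset.mem_range, Finset.mem_union,
        Finset.mem_image, Prod.mk.injEq]
      constructor
      · rintro ⟨⟨ha, hb⟩, hab⟩
        by_cases hbn : b = n
        · exact Or.inr ⟨a, by omega, rfl, hbn.symm⟩
        · exact Or.inl ⟨⟨by omega, by omega⟩, hab⟩
      · rintro (⟨⟨ha, hb⟩, hab⟩ | ⟨i, hi, rfl, rfl⟩)
        · exact ⟨⟨by omega, by omega⟩, hab⟩
        · exact ⟨⟨by omega, by omega⟩, hi⟩
    have hdisj : Disjoint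
        (((Finset.range n) ×ˢ (Finset.range n)).filter fun p : ℕ × ℕ => p.1 < p.2)
        ((Finset.range n).image (fun i => (i, n))) := by
      rw [Finset.disjoint_left]
      rintro ⟨a, b⟩ hmem hmem2
      simp only [Finset.mem_filter, Finset.mem_product, Finset.mem_range] at hmem
      simp only [Finset.mem_image, Prod.mk.injEq] at hmem2
      obtain ⟨i, hi, rfl, rfl⟩ := hmem2
      omega
    rw [hsplit, Finset.card_union_of_disjoint hdisj, ih,
      Finset.card_image_of_injective _ (fun x y h => (Prod.mk.injEq _ _ _ _).mp h |>.1),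
      Finset.card_range]
    have h1 : (n+1).choose 2 = n.choose 1 + n.choose 2 := Nat.choose_succ_succ n 1
    rw [Nat.choose_one_right] at h1
    omega

theorem main_aux (m : ℕ) (g : K → K)
    (hg : ∀ x, g x = (x ^ 2 ^ m)⁻¹) (r : K) (hr : r ≠ 0) (n : ℕ) (hnpos : 0 < n)
    (hper : g^[n] r = r)
    (hinj : Set.InjOn (fun k => g^[k] r) (Set.Iio n)) :
    ∃ T : K, (∑ p ∈ ((Finset.range n ×ˢ Finset.range n).filter fun p : ℕ × ℕ => p.1 < p.2),
        (g^[p.1] r * g^[p.2] r) / (g^[p.1] r - g^[p.2] r) ^ 2) = T ^ 2 + T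
      ∧ T ^ 2 ^ m = T + ((n - 1).choose 2 : K) := by
  classical
  set u : ℕ → K := fun k => g^[k] r with hu
  have unz : ∀ k, u k ≠ 0 := by
    intro k
    induction k with
    | zero => exact hr
    | succ k ih =>
      show g^[k+1] r ≠ 0
      rw [Function.iterate_succ_apply', hg]
      exact inv_ne_zero (pow_ne_zero _ ih)
  have udist : ∀ i j, i < n → j < n → i ≠ j → u i ≠ u j := by
    intro i j hi hj hij h
    exact hij (hinj hi hj h)
  set D := ((Finset.range n ×ˢ Finset.range n).filter fun p : ℕ × ℕ => p.1 < p.2) with hD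
  have hDmem : ∀ p : ℕ × ℕ, p ∈ D ↔ p.1 < n ∧ p.2 < n ∧ p.1 < p.2 := by
    intro p
    simp only [hD, Finset.mem_filter, Finset.mem_product, Finset.mem_range]
    tauto
  refine ⟨∑ p ∈ D, tfun (u p.1) (u p.2), ?_, ?_⟩
  · -- S = T^2 + T
    rw [sum_pow_char, ← Finset.sum_add_distrib]
    refine Finset.sum_congr rfl ?_
    intro p hp
    rw [hDmem] at hp
    exact uv_eq (udist _ _ hp.1 hp.2.1 (Nat.ne_of_lt hp.2.2))
  · -- T^q = T + c
    set shf : ℕ × ℕ → ℕ × ℕ := fun p => if p.2 = n - 1 then (0, p.1 + 1) else (p.1 + 1, p.2 + 1)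
      with hshf
    have key : ∀ p ∈ D, tfun (u p.1) (u p.2) ^ 2 ^ m
        = (if p.2 = n - 1 then (0:K) else 1) + tfun (u (shf p).1) (u (shf p).2) := by
      rintro ⟨i, j⟩ hp
      rw [hDmem] at hp
      obtain ⟨hi, hj, hij⟩ := hp
      have step : tfun (u i) (u j) ^ 2 ^ m = tfun (u (j+1)) (u (i+1)) := by
        rw [tfun_pow m (unz i) (unz j) (udist _ _ hi hj (Nat.ne_of_lt hij))]
        have e1 : (u j ^ 2 ^ m)⁻¹ = u (j+1) := by
          show _ = g^[j+1] r
          rw [Function.iterate_succ_apply', hg]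
        have e2 : (u i ^ 2 ^ m)⁻¹ = u (i+1) := by
          show _ = g^[i+1] r
          rw [Function.iterate_succ_apply', hg]
        rw [e1, e2]
      rw [step]
      by_cases hjn : j = n - 1
      · subst hjn
        have hun : u (n - 1 + 1) = u 0 := by
          show g^[n - 1 + 1] r = g^[0] r
          rw [show n - 1 + 1 = n by omega, hper]
          rfl
        simp only [hshf, if_pos rfl]
        rw [hun]
        simp
      · have hj1 : j + 1 < n := by omega
        have hi1 : i + 1 < n := by omega
        have hne : u (j+1) ≠ u (i+1) := udist _ _ hj1 hi1 (by omega)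
        simp only [hshf, hjn, if_neg hjn, ite_false]
        rw [tfun_swap hne]
    have hsum : (∑ p ∈ D, tfun (u p.1) (u p.2)) ^ 2 ^ m
        = ∑ p ∈ D, ((if p.2 = n - 1 then (0:K) else 1) + tfun (u (shf p).1) (u (shf p).2)) := by
      rw [sum_pow_char_pow]
      exact Finset.sum_congr rfl key
    rw [hsum, Finset.sum_add_distrib, add_comm]
    congr 1
    rotate_left
    · -- count of flips
      rw [Finset.sum_ite, Finset.sum_const_zero, zero_add, Finset.sum_const, nsmul_eq_mul,
        mul_one]
      have hfil : D.filter (fun p => ¬ p.2 = n - 1)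
          = ((Finset.range (n-1)) ×ˢ (Finset.range (n-1))).filter fun p : ℕ × ℕ => p.1 < p.2 := by
        ext ⟨a, b⟩
        simp only [Finset.mem_filter, Finset.mem_product, Finset.mem_range, hDmem]
        constructor
        · rintro ⟨⟨ha, hb, hab⟩, hbn⟩
          exact ⟨⟨by omega, by omega⟩, hab⟩
        · rintro ⟨⟨ha, hb⟩, hab⟩
          exact ⟨⟨by omega, by omega, hab⟩, by omega⟩
      rw [hfil, cardD]
    · -- shifted sum equals T
      set unshf : ℕ × ℕ → ℕ × ℕ := fun p => if p.1 = 0 then (p.2 - 1, n - 1)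
        else (p.1 - 1, p.2 - 1) with hunshf
      refine Finset.sum_nbij' shf unshf ?_ ?_ ?_ ?_ ?_
      · rintro ⟨a, b⟩ hp
        rw [hDmem] at hp ⊢
        simp only [hshf]
        split_ifs with h <;> simp <;> omega
      · rintro ⟨a, b⟩ hp
        rw [hDmem] at hp ⊢
        simp only [hunshf]
        split_ifs with h <;> simp <;> omega
      · rintro ⟨a, b⟩ hp
        rw [hDmem] at hp
        simp only [hshf, hunshf]
        split_ifs with h1 h2 <;> simp_all <;> omega
      · rintro ⟨a, b⟩ hp
        rw [hDmem] at hp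
        simp only [hshf, hunshf]
        split_ifs with h1 h2 <;> simp_all <;> omega
      · intros; rfl

end Stmt9Aux

open scoped Classical in
/-- For `F` of order `q^2`, `q = 2^m`, and `P` the `π`-orbit (under `π(x) = x^{-q}`) of a
nonzero `r` in the algebraic closure, of size `n`, the sum
`S = Σ_{{u,v}⊆P, u≠v} uv/(u-v)^2` lies in the half field `H` of order `q` (`S^q = S`) and its
absolute trace `Tr_{H/F_2}(S) = S + S^2 + ⋯ + S^(q/2)` equals `binom(n-1,2) mod 2`. -/
theorem stmt9 (m q : ℕ) (hm : 0 < m) (hq : q = 2 ^ m)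
    (F : Type) [Field F] [Fintype F] (hF : Fintype.card F = q ^ 2)
    (r : AlgebraicClosure F) (hr : r ≠ 0)
    (P : Finset (AlgebraicClosure F))
    (hP : ∀ x, x ∈ P ↔ ∃ k : ℕ, (fun y : AlgebraicClosure F => (y ^ q)⁻¹)^[k] r = x)
    (n : ℕ) (hn : P.card = n) :
    let S : AlgebraicClosure F :=
      ∑ e ∈ P.sym2.filter (fun e => ¬ e.IsDiag),
        Sym2.lift ⟨fun u v => u * v / (u - v) ^ 2, by
          intro a b
          show a * b / (a - b) ^ 2 = b * a / (b - a) ^ 2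
          rw [mul_comm a b, show (a - b) ^ 2 = (b - a) ^ 2 from by ring]⟩ e
    S ^ q = S ∧
      ∑ i ∈ Finset.range m, S ^ 2 ^ i = (((n - 1).choose 2 : ℕ) : AlgebraicClosure F) := by
  subst hq
  intro S
  -- characteristic 2
  haveI hcharF : CharP F 2 := by
    haveI hp : CharP F (ringChar F) := ringChar.charP F
    obtain ⟨k, hk, hcard⟩ := FiniteField.card F (ringChar F)
    have h2 : ringChar F = 2 := by
      have hdvd : ringChar F ∣ 2 ^ (m * 2) := by
        have h : (2:ℕ) ^ (m * 2) = (2 ^ m) ^ 2 := by rw [pow_mul]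
        rw [h, ← hF, hcard]
        exact dvd_pow_self _ (Nat.pos_iff_ne_zero.mp k.pos)
      exact (Nat.prime_dvd_prime_iff_eq hk Nat.prime_two).mp (hk.dvd_of_dvd_pow hdvd)
    exact h2 ▸ hp
  haveI hchar : CharP (AlgebraicClosure F) 2 :=
    charP_of_injective_algebraMap (algebraMap F (AlgebraicClosure F)).injective 2
  set g : AlgebraicClosure F → AlgebraicClosure F := fun y => (y ^ 2 ^ m)⁻¹ with hg
  have hginj : Function.Injective g := by
    intro a b hab
    have h1 : a ^ 2 ^ m = b ^ 2 ^ m := inv_injective hab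
    have h2 : (a - b) ^ 2 ^ m = 0 := by
      rw [sub_pow_char_pow, h1, sub_self]
    have h3 : a - b = 0 := by
      exact pow_eq_zero_iff (by positivity) |>.mp h2
    exact sub_eq_zero.mp h3
  obtain ⟨hper, hinj, hsurj⟩ := Stmt9Aux.orbit_setup hginj r P hP
  rw [hn] at hper hinj hsurj
  have hrP : r ∈ P := (hP r).mpr ⟨0, rfl⟩
  have hnpos : 0 < n := by
    rw [← hn]
    exact Finset.card_pos.mpr ⟨r, hrP⟩
  obtain ⟨T, hT1, hT2⟩ :=
    Stmt9Aux.main_aux m g (fun x => rfl) r hr n hnpos hper hinj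
  set u : ℕ → AlgebraicClosure F := fun k => g^[k] r with hu
  have uP : ∀ k, u k ∈ P := fun k => (hP _).mpr ⟨k, rfl⟩
  have udist : ∀ i j, i < n → j < n → i ≠ j → u i ≠ u j := by
    intro i j hi hj hij h
    exact hij (hinj hi hj h)
  -- identify S with the indexed double sum
  have hS : S = ∑ p ∈ ((Finset.range n ×ˢ Finset.range n).filter
      fun p : ℕ × ℕ => p.1 < p.2), (u p.1 * u p.2) / (u p.1 - u p.2) ^ 2 := by
    show (∑ e ∈ P.sym2.filter (fun e => ¬ e.IsDiag), _) = _
    refine Eq.symm (Finset.sum_bij (fun (p : ℕ × ℕ) (_ : p ∈ _) => Sym2.mk (u p.1) (u p.2))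
      ?_ ?_ ?_ ?_)
    · rintro ⟨i, j⟩ hp
      simp only [Finset.mem_filter, Finset.mem_product, Finset.mem_range] at hp
      rw [Finset.mem_filter]
      constructor
      · exact Finset.mk_mem_sym2_iff.mpr ⟨uP i, uP j⟩
      · rw [Sym2.isDiag_iff_proj_eq]
        exact udist i j hp.1.1 hp.1.2 (Nat.ne_of_lt hp.2)
    · rintro ⟨i, j⟩ hp ⟨k, l⟩ hq hesym
      simp only [Finset.mem_filter, Finset.mem_product, Finset.mem_range] at hp hq
      rw [Sym2.eq_iff] at hesym
      rcases hesym with ⟨h1, h2⟩ | ⟨h1, h2⟩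
      · have e1 : i = k := hinj hp.1.1 hq.1.1 h1
        have e2 : j = l := hinj hp.1.2 hq.1.2 h2
        simp [e1, e2]
      · have e1 : i = l := hinj hp.1.1 hq.1.2 h1
        have e2 : j = k := hinj hp.1.2 hq.1.1 h2
        omega
    · intro e he
      rw [Finset.mem_filter] at he
      obtain ⟨hesym, hediag⟩ := he
      induction e using Sym2.ind with
      | _ a b =>
        obtain ⟨ha, hb⟩ := Finset.mk_mem_sym2_iff.mp hesym
        obtain ⟨i, hi, rfl⟩ := hsurj a ha
        obtain ⟨j, hj, rfl⟩ := hsurj b hb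
        have hij : i ≠ j := by
          intro h
          exact hediag (by rw [h]; exact Sym2.mk_isDiag_iff.mpr rfl)
        rcases Nat.lt_or_ge i j with h | h
        · refine ⟨(i, j), ?_, rfl⟩
          simp only [Finset.mem_filter, Finset.mem_product, Finset.mem_range]
          exact ⟨⟨hi, hj⟩, h⟩
        · have h' : j < i := by omega
          refine ⟨(j, i), ?_, ?_⟩
          · simp only [Finset.mem_filter, Finset.mem_product, Finset.mem_range]
            exact ⟨⟨hj, hi⟩, h'⟩
          · exact Sym2.eq_swap
    · rintro ⟨i, j⟩ hp
      simp
  rw [hS] at *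
  have hSTT : (∑ p ∈ ((Finset.range n ×ˢ Finset.range n).filter
      fun p : ℕ × ℕ => p.1 < p.2), (u p.1 * u p.2) / (u p.1 - u p.2) ^ 2) = T ^ 2 + T := hT1
  set c : AlgebraicClosure F := (((n - 1).choose 2 : ℕ) : AlgebraicClosure F) with hc
  have hcc : c ^ 2 + c = 0 := by
    rcases Nat.even_or_odd ((n - 1).choose 2) with he | ho
    · have : c = 0 := by
        rw [hc]
        exact (CharP.cast_eq_zero_iff (AlgebraicClosure F) 2 _).mpr he.two_dvd
      rw [this]
      norm_num
    · obtain ⟨k, hk⟩ := ho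
      have : c = 1 := by
        rw [hc, hk]
        push_cast
        rw [CharTwo.two_eq_zero]
        ring
      rw [this]
      rw [one_pow, CharTwo.add_self_eq_zero]
  constructor
  · -- S ^ q = S
    rw [hSTT]
    rw [add_pow_char_pow]
    have hcomm : (T ^ 2) ^ 2 ^ m = (T ^ 2 ^ m) ^ 2 := by
      rw [← pow_mul, ← pow_mul, mul_comm]
    rw [hcomm, hT2, CharTwo.add_sq]
    have : T ^ 2 + c ^ 2 + (T + c) = T ^ 2 + T + (c ^ 2 + c) := by ring
    rw [this, hcc, add_zero]
  · -- trace computation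
    rw [hSTT]
    have hterm : ∀ i, (T ^ 2 + T) ^ 2 ^ i
        = (fun i => T ^ 2 ^ i) (i + 1) - (fun i => T ^ 2 ^ i) i := by
      intro i
      simp only
      rw [CharTwo.sub_eq_add, add_pow_char_pow]
      congr 1
      rw [← pow_mul, pow_succ, mul_comm]
    rw [Finset.sum_congr rfl (fun i _ => hterm i), Finset.sum_range_sub (fun i => T ^ 2 ^ i)]
    rw [CharTwo.sub_eq_add, pow_zero, pow_one, hT2]
    rw [add_comm T c, add_assoc, CharTwo.add_self_eq_zero, add_zero]
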